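/- arXiv:2104.08609 — 2 statements merged into one kernel-verified Lean document; each statement's English description precedes it below -/
import Mathlib

section
/- Let μ be a valuation on K̄[x] with K̄ algebraically closed, and let (a,δ), (a',δ') be pairs with δ = μ(x−a), δ' = μ(x−a'). The monomial valuations μ_{a,δ} and μ_{a',δ'} are equal if and only if δ = δ' and μ(a−a') ≥ δ. -/
open Polynomial

variable {K : Type*} [Field K] {Γ : Type*} [AddCommGroup Γ] [LinearOrder Γ] [IsOrderedAddMonoid Γ]

/-- The `i`-th coefficient of the `q`-expansion of `f`. -/
noncomputable def qCoeff (q f : Polynomial K) (i : ℕ) : Polynomial K :=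
  f / q ^ i % q

/-- The truncation `ν_q` of `w` at `q` :
`ν_q(f) = min_i ν(f_i q^i)` over the `q`-expansion `f = Σ f_i q^i`. -/
noncomputable def trunc (w : Polynomial K → WithTop Γ) (q f : Polynomial K) : WithTop Γ :=
  (Finset.range (f.natDegree + 1)).inf fun i => w (qCoeff q f i * q ^ i)

/-- `b` is an admissible index in the definition of `ε(f)`. -/
def ValidIdx (w : Polynomial K → WithTop Γ) (f : Polynomial K) (b : ℕ) : Prop :=
  1 ≤ b ∧ b ≤ f.natDegree ∧ w f ≠ ⊤ ∧ w (Polynomial.hasseDeriv b f) ≠ ⊤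

/-- `(w(g) - w(∂_c g))/c ≤ (w(f) - w(∂_b f))/b`, written multiplicatively
(cross-multiplied) to stay inside `WithTop Γ`. -/
def RatioLE (w : Polynomial K → WithTop Γ) (g : Polynomial K) (c : ℕ)
    (f : Polynomial K) (b : ℕ) : Prop :=
  b • w g + c • w (Polynomial.hasseDeriv b f) ≤ c • w f + b • w (Polynomial.hasseDeriv c g)

/-- `f` is a generator of the support of `w`. -/
def IsGenSupp (w : Polynomial K → WithTop Γ) (f : Polynomial K) : Prop :=
  ∀ g, w g = ⊤ ↔ f ∣ g

/-- `ε(f) ≥ ε(Q)` (for the valuation `w`), taking the conventions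
`ε(f) = -∞` if `deg f = 0` (more generally, if the defining set is empty) and
`ε(f) = ∞` if `f` generates the support of `w`. -/
def EpsGE (w : Polynomial K → WithTop Γ) (f Q : Polynomial K) : Prop :=
  IsGenSupp w f ∨
    (¬ IsGenSupp w Q ∧
      ((∀ c, ¬ ValidIdx w Q c) ∨
        ∃ b, ValidIdx w f b ∧ ∀ c, ValidIdx w Q c → RatioLE w Q c f b))

/-- `Q` is a key polynomial for `w` : `Q` is monic and
`ε(f) ≥ ε(Q)` implies `deg f ≥ deg Q`. -/
def IsKeyPoly (w : Polynomial K → WithTop Γ) (Q : Polynomial K) : Prop :=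
  Q.Monic ∧ ∀ f : Polynomial K, f ≠ 0 → EpsGE w f Q → Q.natDegree ≤ f.natDegree


private lemma taylor_pow_X_sub_C' (b : K) (n : ℕ) :
    taylor b ((X - C b) ^ n) = X ^ n := by
  have hX : taylor b (X - C b) = X := by
    rw [map_sub, taylor_X, taylor_C]; ring
  induction n with
  | zero => simp
  | succ n ih => rw [pow_succ, taylor_mul, ih, hX, pow_succ]

private lemma qCoeff_X_sub_C' (b : K) (p : Polynomial K) (i : ℕ) :
    qCoeff (X - C b) p i = C ((taylor b p).coeff i) := by
  have hm : (X - C b : Polynomial K).Monic := monic_X_sub_C b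
  have hmi : ((X - C b : Polynomial K) ^ i).Monic := hm.pow i
  have h1 : qCoeff (X - C b) p i = C ((p /ₘ (X - C b) ^ i).eval b) := by
    rw [qCoeff, divByMonic_eq_div _ hmi, ← modByMonic_eq_mod _ hm,
      modByMonic_X_sub_C_eq_C_eval]
  rw [h1]
  congr 1
  have hsplit := modByMonic_add_div p ((X - C b : Polynomial K) ^ i)
  have hcoeff : (taylor b p).coeff i
      = (taylor b (p %ₘ (X - C b) ^ i)).coeff i
        + (X ^ i * taylor b (p /ₘ (X - C b) ^ i)).coeff i := by
    conv_lhs => rw [← hsplit]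
    rw [map_add, taylor_mul, taylor_pow_X_sub_C', coeff_add]
  have hzero : (taylor b (p %ₘ (X - C b) ^ i)).coeff i = 0 := by
    by_cases h0 : p %ₘ (X - C b) ^ i = 0
    · simp [h0]
    · apply coeff_eq_zero_of_natDegree_lt
      rw [natDegree_taylor]
      have hdeg : (p %ₘ (X - C b) ^ i).degree < ((X - C b : Polynomial K) ^ i).degree :=
        degree_modByMonic_lt p hmi
      rw [degree_pow, degree_X_sub_C] at hdeg
      have := (natDegree_lt_iff_degree_lt h0).mpr (by simpa using hdeg)
      simpa using this
  have hX : (X ^ i * taylor b (p /ₘ (X - C b) ^ i)).coeff i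
      = (p /ₘ (X - C b) ^ i).eval b := by
    have := coeff_X_pow_mul (taylor b (p /ₘ (X - C b) ^ i)) i 0
    rw [zero_add] at this
    rw [this, taylor_coeff_zero]
  rw [hcoeff, hzero, hX, zero_add]

private lemma trunc_eq_inf' (μ : AddValuation (Polynomial K) (WithTop Γ)) (b : K)
    (p : Polynomial K) :
    trunc (⇑μ) (X - C b) p =
      (Finset.range (p.natDegree + 1)).inf
        fun i => μ (C ((taylor b p).coeff i)) + i • μ (X - C b) := by
  refine Finset.inf_congr rfl fun i _ => ?_
  rw [qCoeff_X_sub_C', μ.map_mul, μ.map_pow]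

private lemma natCast_nonneg' (μ : AddValuation (Polynomial K) (WithTop Γ)) (n : ℕ) :
    (0 : WithTop Γ) ≤ μ (n : Polynomial K) := by
  induction n with
  | zero => simp
  | succ n ih =>
    push_cast
    exact μ.map_le_add ih μ.map_one.ge

private lemma taylor_coeff_sum' (r : K) (g : Polynomial K) (j : ℕ) :
    (taylor r g).coeff j =
      ∑ i ∈ Finset.range (g.natDegree + 1), (i.choose j : K) * g.coeff i * r ^ (i - j) := by
  rw [taylor_coeff, hasseDeriv_apply, Polynomial.sum_def, eval_finset_sum]
  rw [Finset.sum_subset supp_subset_range_natDegree_succ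
    (fun i _ hi => by simp [Polynomial.notMem_support_iff.mp hi])]
  simp [eval_monomial, mul_assoc]

private lemma trunc_le_trunc' (μ : AddValuation (Polynomial K) (WithTop Γ)) (a a' : K)
    (hδ : μ (X - C a) = μ (X - C a'))
    (hm : μ (X - C a) ≤ μ (C a - C a')) (p : Polynomial K) :
    trunc (⇑μ) (X - C a) p ≤ trunc (⇑μ) (X - C a') p := by
  rw [trunc_eq_inf', trunc_eq_inf', ← hδ]
  set n := p.natDegree with hn
  set δ := μ (X - C a) with hdel
  set g := taylor a p with hg
  refine Finset.le_inf fun j _ => ?_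
  have hta : taylor a' p = taylor (a' - a) g := by
    rw [hg, taylor_taylor, sub_add_cancel]
  have hng : g.natDegree = n := natDegree_taylor p a
  have hc : (taylor a' p).coeff j =
      ∑ i ∈ Finset.range (n + 1), (i.choose j : K) * g.coeff i * (a' - a) ^ (i - j) := by
    rw [hta, taylor_coeff_sum', hng]
  set t : ℕ → Polynomial K := fun i => C ((i.choose j : K) * g.coeff i * (a' - a) ^ (i - j))
    with ht
  have hr : δ ≤ μ (C (a' - a)) := by
    rw [C_sub, μ.map_sub_swap]; exact hm
  have hterm : ∀ i ∈ Finset.range (n + 1),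
      (Finset.range (n + 1)).inf (fun i => μ (C (g.coeff i)) + i • δ) ≤ μ (t i) + j • δ := by
    intro i hi
    by_cases hij : j ≤ i
    · have h1 : (0 : WithTop Γ) ≤ μ (C (i.choose j : K)) := by
        rw [C_eq_natCast]; exact natCast_nonneg' μ _
      have h2 : i • δ ≤ (i - j) • μ (C (a' - a)) + j • δ := by
        calc i • δ = (i - j) • δ + j • δ := by
              rw [← add_nsmul, Nat.sub_add_cancel hij]
          _ ≤ (i - j) • μ (C (a' - a)) + j • δ :=
              add_le_add_left (nsmul_le_nsmul_right hr _) _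
      have h3 : μ (t i) + j • δ
          = (μ (C (i.choose j : K)) + μ (C (g.coeff i)))
            + ((i - j) • μ (C (a' - a)) + j • δ) := by
        rw [ht]
        simp only [C_mul, C_pow, μ.map_mul, μ.map_pow]
        rw [add_assoc]
      calc (Finset.range (n + 1)).inf (fun i => μ (C (g.coeff i)) + i • δ)
          ≤ μ (C (g.coeff i)) + i • δ := Finset.inf_le hi
        _ ≤ (μ (C (i.choose j : K)) + μ (C (g.coeff i)))
            + ((i - j) • μ (C (a' - a)) + j • δ) :=
            add_le_add (le_add_of_nonneg_left h1) h2
        _ = μ (t i) + j • δ := h3.symm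
    · have hch : i.choose j = 0 := Nat.choose_eq_zero_of_lt (lt_of_not_ge hij)
      have : t i = 0 := by simp [ht, hch]
      rw [this]
      simp
  have hsum : (Finset.range (n + 1)).inf (fun i => μ (t i)) ≤ μ (C ((taylor a' p).coeff j)) := by
    rw [hc, map_sum]
    exact μ.map_le_sum fun i hi => Finset.inf_le hi
  obtain ⟨i0, hi0mem, hi0⟩ :=
    Finset.exists_mem_eq_inf (Finset.range (n + 1)) Finset.nonempty_range_add_one
      (fun i => μ (t i))
  calc (Finset.range (n + 1)).inf (fun i => μ (C (g.coeff i)) + i • δ)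
      ≤ μ (t i0) + j • δ := hterm i0 hi0mem
    _ = (Finset.range (n + 1)).inf (fun i => μ (t i)) + j • δ := by rw [← hi0]
    _ ≤ μ (C ((taylor a' p).coeff j)) + j • δ := add_le_add_left hsum _

private lemma trunc_lin' (μ : AddValuation (Polynomial K) (WithTop Γ)) (b c : K) :
    trunc (⇑μ) (X - C b) (X - C c) = μ (C b - C c) ⊓ μ (X - C b) := by
  rw [trunc_eq_inf', natDegree_X_sub_C]
  have h2 : Finset.range 2 = {0, 1} := rfl
  have htay : taylor b (X - C c) = X + C (b - c) := by
    rw [map_sub, taylor_X, taylor_C, C_sub]; ring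
  rw [h2, Finset.inf_insert, Finset.inf_singleton, htay]
  have hc0 : (X + C (b - c)).coeff 0 = b - c := by simp
  have hc1 : (X + C (b - c)).coeff 1 = 1 := by simp
  rw [hc0, hc1, C_1, μ.map_one, C_sub]
  simp

/-- With `δ = μ(x-a)` and `δ' = μ(x-a')`, the monomial valuations
`μ_{a,δ}` and `μ_{a',δ'}` coincide iff `δ = δ'` and `μ(a-a') ≥ δ`. -/
theorem stmt3 [IsAlgClosed K] (μ : AddValuation (Polynomial K) (WithTop Γ)) (a a' : K) :
    (∀ p : Polynomial K, trunc (⇑μ) (X - C a) p = trunc (⇑μ) (X - C a') p) ↔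
      (μ (X - C a) = μ (X - C a') ∧ μ (X - C a) ≤ μ (C a - C a')) := by
  constructor
  · intro h
    have e1 := h (X - C a)
    have e2 := h (X - C a')
    rw [trunc_lin', trunc_lin'] at e1 e2
    have hsw : μ (C a' - C a) = μ (C a - C a') := μ.map_sub_swap _ _
    rw [sub_self, μ.map_zero, top_inf_eq, hsw] at e1
    rw [sub_self, μ.map_zero, top_inf_eq] at e2
    have hle : μ (X - C a) ≤ μ (X - C a') := e1 ▸ inf_le_right
    have hge : μ (X - C a') ≤ μ (X - C a) := e2 ▸ inf_le_right
    have heq := le_antisymm hle hge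
    refine ⟨heq, ?_⟩
    calc μ (X - C a) = μ (X - C a') := heq
      _ ≤ μ (C a - C a') := e2 ▸ inf_le_left
  · rintro ⟨h1, h2⟩ p
    refine le_antisymm (trunc_le_trunc' μ a a' h1 h2 p) (trunc_le_trunc' μ a' a h1.symm ?_ p)
    have hsw2 : μ (C a' - C a) = μ (C a - C a') := μ.map_sub_swap _ _
    rw [hsw2, ← h1]
    exact h2
end

section
/- Let ν be a Krull valuation on K[x], μ an extension to K̄[x], Q ∈ K[x] a key polynomial for ν, and a ∈ K̄ an optimizing root of Q. Then μ_{x−a}(Q) = μ(Q), where μ_{x−a} is the truncation of μ at x−a. -/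
open Polynomial

variable {K : Type*} [Field K] {Γ : Type*} [AddCommGroup Γ] [LinearOrder Γ] [IsOrderedAddMonoid Γ]

section Helpers

variable {L : Type*} [Field L] {Γ : Type*} [AddCommGroup Γ] [LinearOrder Γ] [IsOrderedAddMonoid Γ]

private lemma taylor_sum_range (f : Polynomial L) (a : L) {n : ℕ} (hn : f.natDegree < n) :
    ∑ i ∈ Finset.range n, Polynomial.C ((Polynomial.taylor a f).coeff i) * (X - C a) ^ i = f := by
  have h := Polynomial.sum_taylor_eq f a
  rwa [Polynomial.sum_over_range' _ (by simp) n (by rwa [Polynomial.natDegree_taylor])] at h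

private lemma qCoeff_X_sub_C (a : L) (f : Polynomial L) (i : ℕ) :
    qCoeff (X - C a) f i = Polynomial.C ((Polynomial.taylor a f).coeff i) := by
  set T := Polynomial.taylor a f with hT
  set n := f.natDegree with hn
  set g : Polynomial L := ∑ j ∈ Finset.range (n + 1), C (T.coeff (i + j)) * (X - C a) ^ j with hg
  set r : Polynomial L := ∑ j ∈ Finset.range i, C (T.coeff j) * (X - C a) ^ j with hr
  have hmon : ((X - C a) ^ i).Monic := (monic_X_sub_C a).pow i
  have hdegpow : ((X - C a) ^ i).degree = (i : WithBot ℕ) := by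
    rw [degree_pow, degree_X_sub_C, nsmul_eq_mul, mul_one]
  have hdeg_r : r.degree < ((X - C a) ^ i).degree := by
    rw [hdegpow]
    refine lt_of_le_of_lt (Polynomial.degree_sum_le _ _) ?_
    rw [Finset.sup_lt_iff (by exact_mod_cast WithBot.bot_lt_coe i)]
    intro j hj
    refine lt_of_le_of_lt (Polynomial.degree_mul_le _ _) ?_
    have h1 : ((X - C a) ^ j).degree = (j : WithBot ℕ) := by
      rw [degree_pow, degree_X_sub_C, nsmul_eq_mul, mul_one]
    calc (C (T.coeff j)).degree + ((X - C a) ^ j).degree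
        ≤ 0 + (j : WithBot ℕ) := add_le_add degree_C_le (le_of_eq h1)
      _ = (j : WithBot ℕ) := by rw [zero_add]
      _ < (i : WithBot ℕ) := by exact_mod_cast (Finset.mem_range.mp hj)
  have hid : r + (X - C a) ^ i * g = f := by
    rw [hg, hr, Finset.mul_sum]
    have h2 : ∀ j, (X - C a) ^ i * (C (T.coeff (i + j)) * (X - C a) ^ j)
        = C (T.coeff (i + j)) * (X - C a) ^ (i + j) := by
      intro j; rw [pow_add]; ring
    simp_rw [h2]
    rw [← Finset.sum_range_add (fun k => C (T.coeff k) * (X - C a) ^ k) i (n + 1)]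
    exact taylor_sum_range f a (by omega)
  have hdiv : f / (X - C a) ^ i = g := by
    rw [← Polynomial.divByMonic_eq_div f hmon]
    exact (Polynomial.div_modByMonic_unique g r hmon ⟨hid, hdeg_r⟩).1
  rw [qCoeff, hdiv, Polynomial.mod_X_sub_C_eq_C_eval]
  congr 1
  rw [hg]
  simp only [Polynomial.eval_finset_sum, Polynomial.eval_mul, Polynomial.eval_pow,
    Polynomial.eval_sub, Polynomial.eval_X, Polynomial.eval_C, sub_self]
  rw [Finset.sum_eq_single 0]
  · simp
  · intro j _ hj; rw [zero_pow hj, mul_zero]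
  · intro h; simp at h

private lemma addVal_multiset_prod (μ : AddValuation (Polynomial L) (WithTop Γ))
    (s : Multiset L) :
    μ (s.map fun r => X - C r).prod = (s.map fun r => μ (X - C r)).sum := by
  induction s using Multiset.induction with
  | empty => simp
  | cons r0 s ih => simp [Multiset.map_cons, Multiset.prod_cons, μ.map_mul, ih]

private lemma const_val_ge (μ : AddValuation (Polynomial L) (WithTop Γ)) {a r0 : L}
    (h0 : μ (X - C r0) ≤ μ (X - C a)) : μ (X - C r0) ≤ μ (C (a - r0)) := by
  have hc : (C (a - r0) : Polynomial L) = (X - C r0) + (-(X - C a)) := by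
    rw [C_sub]; ring
  calc μ (X - C r0) = min (μ (X - C r0)) (μ (-(X - C a))) := by
        rw [μ.map_neg]; exact (min_eq_left h0).symm
    _ ≤ μ ((X - C r0) + (-(X - C a))) := μ.map_add _ _
    _ = μ (C (a - r0)) := by rw [hc]

private lemma key_ineq (μ : AddValuation (Polynomial L) (WithTop Γ)) (a : L) (s : Multiset L)
    (hs : ∀ r ∈ s, μ (X - C r) ≤ μ (X - C a)) (i : ℕ) :
    (s.map fun r => μ (X - C r)).sum ≤
      μ (C ((Polynomial.taylor a (s.map fun r => X - C r).prod).coeff i)) + i • μ (X - C a) := by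
  induction s using Multiset.induction generalizing i with
  | empty =>
    simp only [Multiset.map_zero, Multiset.prod_zero, Multiset.sum_zero, Polynomial.taylor_one]
    rcases Nat.eq_zero_or_pos i with h | h
    · subst h; simp [Polynomial.coeff_one]
    · rw [Polynomial.coeff_C, if_neg (by omega)]
      simp [μ.map_zero, top_add]
  | cons r0 s ih =>
    have h0 : μ (X - C r0) ≤ μ (X - C a) := hs r0 (Multiset.mem_cons_self _ _)
    have hs' : ∀ r ∈ s, μ (X - C r) ≤ μ (X - C a) := fun r hr => hs r (Multiset.mem_cons_of_mem hr)
    have hca := const_val_ge μ h0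
    set T := Polynomial.taylor a (s.map fun r => X - C r).prod with hTdef
    have hprod : Polynomial.taylor a ((r0 ::ₘ s).map fun r => X - C r).prod
        = (X + C (a - r0)) * T := by
      rw [Multiset.map_cons, Multiset.prod_cons, Polynomial.taylor_mul]
      congr 1
      rw [map_sub, Polynomial.taylor_X, Polynomial.taylor_C, C_sub]
      ring
    rw [hprod, Multiset.map_cons, Multiset.sum_cons]
    have hcoeff : ∀ k, ((X + C (a - r0)) * T).coeff k
        = (X * T).coeff k + (a - r0) * T.coeff k := by
      intro k; rw [add_mul, Polynomial.coeff_add, Polynomial.coeff_C_mul]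
    rcases i with _ | j
    · rw [hcoeff 0, Polynomial.mul_coeff_zero, Polynomial.coeff_X_zero, zero_mul, zero_add,
        C_mul, μ.map_mul]
      have h1 := ih hs' 0
      simp only [zero_smul, add_zero] at h1 ⊢
      calc μ (X - C r0) + (s.map fun r => μ (X - C r)).sum
          ≤ μ (C (a - r0)) + μ (C (T.coeff 0)) := add_le_add hca h1
        _ = _ := rfl
    · rw [hcoeff (j + 1), Polynomial.coeff_X_mul]
      have hmin : min (μ (C (T.coeff j))) (μ (C ((a - r0) * T.coeff (j + 1))))
          ≤ μ (C (T.coeff j + (a - r0) * T.coeff (j + 1))) := by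
        rw [C_add]; exact μ.map_add _ _
      rcases le_total (μ (C (T.coeff j))) (μ (C ((a - r0) * T.coeff (j + 1)))) with h | h
      · have hle : μ (C (T.coeff j)) ≤ μ (C (T.coeff j + (a - r0) * T.coeff (j + 1))) := by
          rw [← min_eq_left h]; exact hmin
        calc μ (X - C r0) + (s.map fun r => μ (X - C r)).sum
            ≤ μ (X - C a) + (μ (C (T.coeff j)) + j • μ (X - C a)) := add_le_add h0 (ih hs' j)
          _ = μ (C (T.coeff j)) + (j + 1) • μ (X - C a) := by rw [succ_nsmul]; abel
          _ ≤ _ := add_le_add_left hle _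
      · have hle : μ (C ((a - r0) * T.coeff (j + 1)))
            ≤ μ (C (T.coeff j + (a - r0) * T.coeff (j + 1))) := by
          rw [← min_eq_right h]; exact hmin
        rw [C_mul, μ.map_mul] at hle
        calc μ (X - C r0) + (s.map fun r => μ (X - C r)).sum
            ≤ μ (C (a - r0)) + (μ (C (T.coeff (j + 1))) + (j + 1) • μ (X - C a)) :=
              add_le_add hca (ih hs' (j + 1))
          _ = (μ (C (a - r0)) + μ (C (T.coeff (j + 1)))) + (j + 1) • μ (X - C a) := by abel
          _ ≤ _ := add_le_add_left hle _

end Helpers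

/-- If `Q` is a key polynomial for `ν` and `a` an optimizing root of `Q`,
then `μ_{x-a}(Q) = μ(Q)`. -/
theorem stmt7 {L : Type*} [Field L] [Algebra K L] [IsAlgClosure K L]
    (ν : AddValuation (Polynomial K) (WithTop Γ)) (μ : AddValuation (Polynomial L) (WithTop Γ))
    (hKrull : ∀ p : Polynomial K, p ≠ 0 → ν p ≠ ⊤)
    (hext : ∀ p : Polynomial K, ν p = μ (p.map (algebraMap K L)))
    (Q : Polynomial K) (hQ : IsKeyPoly (⇑ν) Q)
    (a : L) (ha : Polynomial.aeval a Q = 0)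
    (hopt : ∀ b : L, Polynomial.aeval b Q = 0 → μ (X - C b) ≤ μ (X - C a)) :
    trunc (⇑μ) (X - C a) (Q.map (algebraMap K L)) = μ (Q.map (algebraMap K L)) := by
  classical
  have _inst : IsAlgClosed L := IsAlgClosure.isAlgClosed K
  set P : Polynomial L := Q.map (algebraMap K L) with hPdef
  have hPm : P.Monic := hQ.1.map _
  have hP0 : P ≠ 0 := hPm.ne_zero
  have hsplit : P = (P.roots.map fun r => X - C r).prod :=
    (IsAlgClosed.splits P).eq_prod_roots_of_monic hPm
  have hroot : ∀ r ∈ P.roots, μ (X - C r) ≤ μ (X - C a) := by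
    intro r hr
    apply hopt
    have h := isRoot_of_mem_roots hr
    rw [Polynomial.aeval_def, ← Polynomial.eval_map]
    exact h
  have hμP : μ P = (P.roots.map fun r => μ (X - C r)).sum := by
    conv_lhs => rw [hsplit]
    exact addVal_multiset_prod μ _
  have hterm : ∀ i, μ (qCoeff (X - C a) P i * (X - C a) ^ i)
      = μ (C ((Polynomial.taylor a P).coeff i)) + i • μ (X - C a) := by
    intro i
    rw [qCoeff_X_sub_C, μ.map_mul, μ.map_pow]
  unfold trunc
  apply le_antisymm
  · have hPsum : P = ∑ i ∈ Finset.range (P.natDegree + 1),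
        qCoeff (X - C a) P i * (X - C a) ^ i := by
      simp_rw [qCoeff_X_sub_C]
      exact (taylor_sum_range P a (Nat.lt_succ_self _)).symm
    conv_rhs => rw [hPsum]
    exact μ.map_le_sum (fun i hi => Finset.inf_le hi)
  · apply Finset.le_inf
    intro i _
    rw [hterm i, hμP]
    have h := key_ineq μ a P.roots hroot i
    rwa [← hsplit] at h
end
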